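/- If M is a monoidal category in which the unit object I is terminal, then the functor F: Bimod_M(^{Id}M^I, ^{Id}M^I) → M sending a bimodule endofunctor φ to φ(I) is part of an equivalence of categories, with inverse Ind sending X to the endofunctor Y ↦ Y ⊗ X. -/

import Mathlib

open CategoryTheory MonoidalCategory

variable (M : Type*) [Category M] [MonoidalCategory M]

/-- An endomorphism of the `M`-bimodule `^{Id}M^{I}`: `M` with the regular left
action `X ▷ B = X ⊗ B` and the trivial right action `B ◁ X = B`.  The datum is a
functor `F : M ⥤ M` with coherences `lam_{X,B} : F(X ▷ B) ≅ X ▷ F(B)` and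
`rho_{B,X} : F(B ◁ X) ≅ F(B) ◁ X`, i.e. `rho_{B,X} : F(B) ≅ F(B)`. -/
structure LeftRegEndo where
  F : M ⥤ M
  lam : ∀ X B : M, F.obj (X ⊗ B) ≅ X ⊗ F.obj B
  rho : ∀ B X : M, F.obj B ≅ F.obj B
  lam_natural : ∀ {X X' B B' : M} (f : X ⟶ X') (g : B ⟶ B'),
    F.map (f ⊗ₘ g) ≫ (lam X' B').hom = (lam X B).hom ≫ (f ⊗ₘ F.map g)
  rho_natural_left : ∀ {B B' : M} (g : B ⟶ B') (X : M),
    F.map g ≫ (rho B' X).hom = (rho B X).hom ≫ F.map g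
  rho_natural_right : ∀ (B : M) {X X' : M}, (X ⟶ X') → (rho B X).hom = (rho B X').hom
  lam_coherence : ∀ X Y B : M,
    F.map (α_ X Y B).hom ≫ (lam X (Y ⊗ B)).hom ≫ (X ◁ (lam Y B).hom) =
      (lam (X ⊗ Y) B).hom ≫ (α_ X Y (F.obj B)).hom
  rho_coherence : ∀ B X Y : M,
    (rho B X).hom ≫ (rho B Y).hom = (rho B (X ⊗ Y)).hom
  rho_unit : ∀ B : M, rho B (𝟙_ M) = Iso.refl (F.obj B)
  middle_coherence : ∀ X B Y : M,
    (rho (X ⊗ B) Y).hom ≫ (lam X B).hom = (lam X B).hom ≫ (X ◁ (rho B Y).hom)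

instance : Category (LeftRegEndo M) where
  Hom p q := { t : p.F ⟶ q.F //
    (∀ X B : M, t.app (X ⊗ B) ≫ (q.lam X B).hom = (p.lam X B).hom ≫ (X ◁ t.app B)) ∧
    (∀ B X : M, t.app B ≫ (q.rho B X).hom = (p.rho B X).hom ≫ t.app B) }
  id p := ⟨𝟙 p.F, fun X B => by simp, fun B X => by simp⟩
  comp {p q r} t s := ⟨t.1 ≫ s.1, fun X B => by
      rw [NatTrans.comp_app, Category.assoc, s.2.1, ← Category.assoc, t.2.1,
        Category.assoc, NatTrans.comp_app, MonoidalCategory.whiskerLeft_comp],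
    fun B X => by
      rw [NatTrans.comp_app, Category.assoc, s.2.2, ← Category.assoc, t.2.2,
        Category.assoc]⟩
  id_comp t := Subtype.ext (Category.id_comp _)
  comp_id t := Subtype.ext (Category.comp_id _)
  assoc f g h := Subtype.ext (Category.assoc _ _ _)

/-- Evaluation of a bimodule endofunctor of `^{Id}M^{I}` at the unit object. -/
def evalAtUnit : LeftRegEndo M ⥤ M where
  obj p := p.F.obj (𝟙_ M)
  map t := t.1.app (𝟙_ M)
  map_id _ := rfl
  map_comp _ _ := rfl

/-- When the unit is terminal, all the `rho` coherences are identities. -/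
lemma rho_hom_eq_id (hI : Limits.IsTerminal (𝟙_ M)) (p : LeftRegEndo M) (B X : M) :
    (p.rho B X).hom = 𝟙 (p.F.obj B) := by
  rw [p.rho_natural_right B (hI.from X), p.rho_unit B]; rfl

/-- The functor `Y ↦ Y ⊗ X`. -/
def tensorRightF (X : M) : M ⥤ M where
  obj Y := Y ⊗ X
  map g := g ▷ X
  map_id Y := by simp
  map_comp f g := by simp

@[simp] lemma tensorRightF_obj (X Y : M) : (tensorRightF M X).obj Y = Y ⊗ X := rfl

@[simp] lemma tensorRightF_map (X : M) {Y Y' : M} (g : Y ⟶ Y') :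
    (tensorRightF M X).map g = g ▷ X := rfl

/-- The bimodule endofunctor `Y ↦ Y ⊗ X` of `^{Id}M^{I}`. -/
def indObj (X : M) : LeftRegEndo M where
  F := tensorRightF M X
  lam A B := α_ A B X
  rho _ _ := Iso.refl _
  lam_natural f g := by
    simp only [tensorRightF_map]
    simpa using associator_naturality f g (𝟙 X)
  rho_natural_left g _ := by simp
  rho_natural_right := by intros; rfl
  lam_coherence A Y B := by
    simp only [tensorRightF_map]
    exact pentagon A Y B X
  rho_coherence _ _ _ := by simp
  rho_unit _ := rfl
  middle_coherence _ _ _ := by simp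

def indFunctor : M ⥤ LeftRegEndo M where
  obj X := indObj M X
  map {X Y} f :=
    ⟨{ app := fun B => B ◁ f
       naturality := fun _ _ g => by
        simp only [indObj, tensorRightF_map]
        exact (whisker_exchange g f).symm },
      fun A B => by
        show ((A ⊗ B) ◁ f) ≫ (α_ A B Y).hom = (α_ A B X).hom ≫ (A ◁ (B ◁ f))
        simpa using associator_naturality (𝟙 A) (𝟙 B) f,
      fun _ _ => by
        show (_ ◁ f) ≫ 𝟙 _ = 𝟙 _ ≫ (_ ◁ f)
        simp⟩
  map_id X := Subtype.ext (by ext B; exact MonoidalCategory.whiskerLeft_id B X)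
  map_comp f g := Subtype.ext (by ext B; exact MonoidalCategory.whiskerLeft_comp B f g)

section
variable {M}

/-- The comparison map `φ(B) ⟶ B ⊗ φ(I)`. -/
def unitHomApp (p : LeftRegEndo M) (B : M) :
    p.F.obj B ⟶ B ⊗ p.F.obj (𝟙_ M) :=
  p.F.map (ρ_ B).inv ≫ (p.lam B (𝟙_ M)).hom

lemma unitHomApp_naturality (p : LeftRegEndo M) {B B' : M} (g : B ⟶ B') :
    p.F.map g ≫ unitHomApp p B' = unitHomApp p B ≫ (g ▷ p.F.obj (𝟙_ M)) := by
  have h1 : p.F.map g ≫ p.F.map (ρ_ B').inv = p.F.map (ρ_ B).inv ≫ p.F.map (g ⊗ₘ 𝟙 (𝟙_ M)) := by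
    rw [← p.F.map_comp, ← p.F.map_comp]
    congr 1
    simpa using (rightUnitor_naturality g).symm
  have h2 := p.lam_natural g (𝟙 (𝟙_ M))
  rw [p.F.map_id, tensorHom_id] at h2
  simp only [unitHomApp, ← Category.assoc, h1]
  simp only [Category.assoc, tensorHom_id] at h2 ⊢
  rw [h2]

lemma unitHomApp_lam (p : LeftRegEndo M) (A B : M) :
    unitHomApp p (A ⊗ B) ≫ (α_ A B (p.F.obj (𝟙_ M))).hom =
      (p.lam A B).hom ≫ (A ◁ unitHomApp p B) := by
  have hρ : (ρ_ (A ⊗ B)).inv = (A ◁ (ρ_ B).inv) ≫ (α_ A B (𝟙_ M)).inv := by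
    rw [rightUnitor_tensor_inv]
  have hpent := p.lam_coherence A B (𝟙_ M)
  have hnat := p.lam_natural (𝟙 A) (ρ_ B).inv
  simp only [unitHomApp, hρ, p.F.map_comp, Category.assoc]
  rw [← hpent]
  simp only [← Category.assoc, ← p.F.map_comp, Iso.inv_hom_id, p.F.map_id, Category.id_comp]
  simp only [id_tensorHom] at hnat
  rw [MonoidalCategory.whiskerLeft_comp, ← Category.assoc, hnat, Category.assoc,
    ← MonoidalCategory.whiskerLeft_comp]

instance (p : LeftRegEndo M) (B : M) : IsIso (unitHomApp p B) := by
  unfold unitHomApp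
  infer_instance

/-- The unit isomorphism `p ≅ Ind (p(I))`, componentwise. -/
noncomputable def unitIsoApp (hI : Limits.IsTerminal (𝟙_ M)) (p : LeftRegEndo M) :
    p ≅ (indFunctor M).obj (p.F.obj (𝟙_ M)) where
  hom := ⟨{ app := fun B => unitHomApp p B
            naturality := fun _ _ g => unitHomApp_naturality p g },
    fun A B => unitHomApp_lam p A B,
    fun B X => by simp [indFunctor, indObj, rho_hom_eq_id M hI]⟩
  inv := ⟨{ app := fun B => inv (unitHomApp p B) (I := instIsIsoUnitHomApp p B)
            naturality := fun B B' g => by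
              show (g ▷ p.F.obj (𝟙_ M)) ≫ inv (unitHomApp p B') =
                inv (unitHomApp p B) ≫ p.F.map g
              rw [IsIso.comp_inv_eq, Category.assoc, unitHomApp_naturality p g,
                IsIso.inv_hom_id_assoc] },
    fun A B => by
      show inv (unitHomApp p (A ⊗ B)) ≫ (p.lam A B).hom =
        (α_ A B (p.F.obj (𝟙_ M))).hom ≫ (A ◁ inv (unitHomApp p B))
      rw [IsIso.inv_comp_eq, ← Category.assoc, unitHomApp_lam, Category.assoc,
        ← MonoidalCategory.whiskerLeft_comp, IsIso.hom_inv_id,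
        MonoidalCategory.whiskerLeft_id, Category.comp_id],
    fun B X => by simp [indFunctor, indObj, rho_hom_eq_id M hI]⟩
  hom_inv_id := Subtype.ext (NatTrans.ext (funext fun B => IsIso.hom_inv_id (unitHomApp p B)))
  inv_hom_id := Subtype.ext (NatTrans.ext (funext fun B => IsIso.inv_hom_id (unitHomApp p B)))

/-- The equivalence `Bimod_M(^{Id}M^{I}, ^{Id}M^{I}) ≌ M`. -/
noncomputable def evalUnitEquiv (hI : Limits.IsTerminal (𝟙_ M)) : LeftRegEndo M ≌ M :=
  CategoryTheory.Equivalence.mk (evalAtUnit M) (indFunctor M)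
    (NatIso.ofComponents (fun p => unitIsoApp hI p) (by
      intro p q t
      apply Subtype.ext
      ext B
      show t.1.app B ≫ unitHomApp q B = unitHomApp p B ≫ (B ◁ t.1.app (𝟙_ M))
      simp only [unitHomApp, ← Category.assoc, ← t.1.naturality]
      simp only [Category.assoc, t.2.1 B (𝟙_ M)]))
    (NatIso.ofComponents (fun X => λ_ X) (by
      intro X Y f
      show ((𝟙_ M) ◁ f) ≫ (λ_ Y).hom = (λ_ X).hom ≫ f
      simp))

end

/-- If the unit object `I` of a monoidal category `M` is terminal,
then evaluation at `I` is an equivalence of categories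
`Bimod_M(^{Id}M^{I}, ^{Id}M^{I}) ≃ M` (with inverse `X ↦ (Y ↦ Y ⊗ X)`). -/
theorem stmt_2 (hI : Limits.IsTerminal (𝟙_ M)) :
    (evalAtUnit M).IsEquivalence := by
  exact (evalUnitEquiv (M := M) hI).isEquivalence_functor
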